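/- arXiv:0704.0197 — 3 statements merged into one kernel-verified Lean document; each statement's English description precedes it below -/
import Mathlib

section
/- Let K ≥ 1 and let p ∈ [0,1] be such that p·2^K is an integer. Let F^fixed_{K,p} be the uniform distribution on the set of Boolean functions f : 𝔽₂^K → 𝔽₂ whose truth table has Hamming weight exactly p·2^K. Then the expected value of the average sensitivity satisfies E_{F^fixed_{K,p}}[s(f)] = 2^(K+1)·K·p·(1−p) / (2^K − 1). -/
open Finset

/-- Boolean vectors of length `K`, modelling `𝔽₂^K`. -/
abbrev BVec (K : ℕ) := Fin K → Bool

/-- Flip the `i`-th coordinate of `w`, i.e. `w ⊕ eᵢ`. -/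
def flipCoord {K : ℕ} (w : BVec K) (i : Fin K) : BVec K :=
  Function.update w i (!(w i))

/-- The sensitivity `s_f(w)`: the number of coordinates `i` with `f(w) ≠ f(w ⊕ eᵢ)`. -/
def sens {K : ℕ} (f : BVec K → Bool) (w : BVec K) : ℕ :=
  (univ.filter (fun i : Fin K => f w ≠ f (flipCoord w i))).card

/-- The average sensitivity `s(f) = 2⁻ᴷ Σ_w s_f(w)`. -/
noncomputable def avgSens {K : ℕ} (f : BVec K → Bool) : ℝ :=
  (2 ^ K : ℝ)⁻¹ * ∑ w : BVec K, (sens f w : ℝ)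

/-- The Hamming weight of the truth table of `f`. -/
def wt {K : ℕ} (f : BVec K → Bool) : ℕ :=
  (univ.filter (fun w : BVec K => f w = true)).card

/-- Hamming weight of a Boolean vector. -/
def hw {K : ℕ} (w : BVec K) : ℕ :=
  (univ.filter (fun i : Fin K => w i = true)).card

/-- Interpret a Boolean value as a real number. -/
def b2r (b : Bool) : ℝ := if b then 1 else 0

/-- Bernoulli(`p`) product weight of a Boolean function: each of the `2^K` truth-table
entries is independently `1` with probability `p`. -/
noncomputable def bernP {K : ℕ} (p : ℝ) (f : BVec K → Bool) : ℝ :=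
  p ^ wt f * (1 - p) ^ (2 ^ K - wt f)

/-- `s^(l)(f,w)`: number of `x` with Hamming weight `l` such that `f(w) ≠ f(w ⊕ x)`. -/
def sensOrd {K : ℕ} (f : BVec K → Bool) (l : ℕ) (w : BVec K) : ℕ :=
  (univ.filter (fun x : BVec K => hw x = l ∧ f w ≠ f (fun i => xor (w i) (x i)))).card

/-- Average sensitivity of order `l`. -/
noncomputable def avgSensOrd {K : ℕ} (f : BVec K → Bool) (l : ℕ) : ℝ :=
  (2 ^ K : ℝ)⁻¹ * ∑ w : BVec K, (sensOrd f l w : ℝ)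

section Aux
variable {K : ℕ}

lemma wt_comp (f : BVec K → Bool) (σ : Equiv.Perm (BVec K)) :
    wt (fun w => f (σ w)) = wt f := by
  unfold wt
  exact Finset.card_equiv σ (by simp)

lemma pairs_const (t : ℕ) {a b a' b' : BVec K} (hab : a ≠ b) (hab' : a' ≠ b') :
    (univ.filter fun f : BVec K → Bool => wt f = t ∧ f a ≠ f b).card
      = (univ.filter fun f : BVec K → Bool => wt f = t ∧ f a' ≠ f b').card := by
  classical
  set u := Equiv.swap a a' b with hu
  set σ : Equiv.Perm (BVec K) := (Equiv.swap a a').trans (Equiv.swap u b') with hσ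
  have hσa : σ a = a' := by
    have h1 : σ a = Equiv.swap u b' a' := by
      rw [hσ, Equiv.trans_apply, Equiv.swap_apply_left]
    rw [h1]
    rcases eq_or_ne b a' with h | h
    · have hu' : u = a := by rw [hu, h, Equiv.swap_apply_right]
      rw [hu']
      exact Equiv.swap_apply_of_ne_of_ne (h ▸ (Ne.symm hab)) hab'
    · have hu' : u = b := by
        rw [hu]; exact Equiv.swap_apply_of_ne_of_ne (Ne.symm hab) h
      rw [hu']
      exact Equiv.swap_apply_of_ne_of_ne (Ne.symm h) hab'
  have hσb : σ b = b' := by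
    rw [hσ, Equiv.trans_apply, show Equiv.swap a a' b = u from hu.symm,
      Equiv.swap_apply_left]
  apply Finset.card_equiv (Equiv.arrowCongr σ (Equiv.refl Bool))
  intro f
  have ea : (Equiv.arrowCongr σ (Equiv.refl Bool)) f a' = f a := by
    simp [Equiv.arrowCongr_apply, ← hσa]
  have eb : (Equiv.arrowCongr σ (Equiv.refl Bool)) f b' = f b := by
    simp [Equiv.arrowCongr_apply, ← hσb]
  have ew : wt ((Equiv.arrowCongr σ (Equiv.refl Bool)) f) = wt f := by
    have : ((Equiv.arrowCongr σ (Equiv.refl Bool)) f) = fun w => f (σ.symm w) := by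
      funext w; simp [Equiv.arrowCongr_apply]
    rw [this, wt_comp f σ.symm]
  simp only [mem_filter, mem_univ, true_and, ea, eb, ew]

lemma count_pairs_of_wt (f : BVec K → Bool) :
    ((univ ×ˢ univ).filter fun ab : BVec K × BVec K => f ab.1 ≠ f ab.2).card
      = 2 * (wt f * (2 ^ K - wt f)) := by
  classical
  have hcard : (univ : Finset (BVec K)).card = 2 ^ K := by
    simp [BVec]
  have hF : (univ.filter fun w : BVec K => f w = false).card = 2 ^ K - wt f := by
    have h := Finset.card_filter_add_card_filter_not
      (s := (univ : Finset (BVec K))) (p := fun w => f w = true)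
    simp only [Bool.not_eq_true] at h
    rw [hcard] at h
    unfold wt
    omega
  have hset : (univ ×ˢ univ).filter (fun ab : BVec K × BVec K => f ab.1 ≠ f ab.2)
      = ((univ.filter fun w : BVec K => f w = true) ×ˢ (univ.filter fun w : BVec K => f w = false))
        ∪ ((univ.filter fun w : BVec K => f w = false) ×ˢ (univ.filter fun w : BVec K => f w = true)) := by
    ext ⟨x, y⟩
    simp only [mem_filter, mem_product, mem_union, mem_univ, true_and]
    cases hx : f x <;> cases hy : f y <;> simp
  rw [hset, Finset.card_union_of_disjoint, Finset.card_product, Finset.card_product, hF]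
  · unfold wt; ring
  · rw [Finset.disjoint_left]
    rintro ⟨x, y⟩ h1 h2
    simp only [mem_product, mem_filter, mem_univ, true_and] at h1 h2
    rw [h1.1] at h2; exact Bool.noConfusion h2.1

end Aux

theorem expected_avgSens_fixedBias (K : ℕ) (hK : 1 ≤ K) (p : ℝ)
    (hp0 : 0 ≤ p) (hp1 : p ≤ 1) (t : ℕ) (ht : (t : ℝ) = p * 2 ^ K) :
    (∑ f ∈ univ.filter (fun f : BVec K → Bool => wt f = t), avgSens f)
      / ((univ.filter (fun f : BVec K → Bool => wt f = t)).card : ℝ)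
      = 2 ^ (K + 1) * K * p * (1 - p) / ((2 : ℝ) ^ K - 1) := by
  classical
  set S := univ.filter (fun f : BVec K → Bool => wt f = t) with hS
  have hcardBV : (univ : Finset (BVec K)).card = 2 ^ K := by simp [BVec]
  have hN2 : 2 ≤ 2 ^ K := by
    calc 2 = 2 ^ 1 := (pow_one 2).symm
    _ ≤ 2 ^ K := Nat.pow_le_pow_right (by norm_num) hK
  have h2KR : ((2 ^ K : ℕ) : ℝ) = (2 : ℝ) ^ K := by push_cast; ring
  have htN : t ≤ 2 ^ K := by
    have h1 : (t : ℝ) ≤ ((2 ^ K : ℕ) : ℝ) := by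
      rw [ht, h2KR]
      nlinarith [pow_pos (show (0:ℝ) < 2 by norm_num) K]
    exact_mod_cast h1
  -- a base distinct pair
  have hab₀ : (fun _ => false : BVec K) ≠ (fun _ => true : BVec K) := by
    intro h
    have := congrFun h ⟨0, hK⟩
    simp at this
  set c₀ := (univ.filter fun f : BVec K → Bool =>
      wt f = t ∧ f (fun _ => false) ≠ f (fun _ => true)).card with hc₀
  -- S is nonempty
  have hSne : S.Nonempty := by
    obtain ⟨s, _, hscard⟩ := Finset.exists_subset_card_eq
      (show t ≤ (univ : Finset (BVec K)).card by rw [hcardBV]; exact htN)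
    refine ⟨fun w => decide (w ∈ s), ?_⟩
    rw [hS, mem_filter]
    refine ⟨mem_univ _, ?_⟩
    unfold wt
    rw [← hscard]
    congr 1
    ext w
    simp
  have hD : S.card ≠ 0 := Finset.card_ne_zero_of_mem hSne.choose_spec
  -- flipping changes the point
  have hflip : ∀ (w : BVec K) (i : Fin K), w ≠ flipCoord w i := by
    intro w i h
    have := congrFun h i
    simp [flipCoord] at this
  -- Equation 1
  have hsum1 : ∑ f ∈ S, ∑ w : BVec K, sens f w = 2 ^ K * (K * c₀) := by
    rw [Finset.sum_comm]
    have hinner : ∀ w : BVec K, ∑ f ∈ S, sens f w = K * c₀ := by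
      intro w
      have : ∀ f, sens f w = ∑ i : Fin K, if f w ≠ f (flipCoord w i) then 1 else 0 := by
        intro f; rw [sens, Finset.card_filter]
      simp only [this]
      rw [Finset.sum_comm]
      have hi : ∀ i : Fin K,
          (∑ f ∈ S, if f w ≠ f (flipCoord w i) then 1 else 0) = c₀ := by
        intro i
        rw [← Finset.card_filter, hS, Finset.filter_filter, hc₀]
        exact pairs_const t (hflip w i) hab₀
      rw [Finset.sum_congr rfl (fun i _ => hi i), Finset.sum_const, Finset.card_univ,
        Fintype.card_fin, smul_eq_mul]
    rw [Finset.sum_congr rfl (fun w _ => hinner w), Finset.sum_const, hcardBV, smul_eq_mul]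
  -- Equation 2
  have hsum2 : c₀ * (2 ^ K * (2 ^ K - 1)) = S.card * (2 * (t * (2 ^ K - t))) := by
    have left : ∑ ab ∈ (univ : Finset (BVec K)).offDiag,
        (univ.filter fun f : BVec K → Bool => wt f = t ∧ f ab.1 ≠ f ab.2).card
          = c₀ * (2 ^ K * (2 ^ K - 1)) := by
      have key : ∀ ab ∈ (univ : Finset (BVec K)).offDiag,
          (univ.filter fun f : BVec K → Bool => wt f = t ∧ f ab.1 ≠ f ab.2).card = c₀ := by
        rintro ⟨a, b⟩ hab
        rw [Finset.mem_offDiag] at hab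
        exact pairs_const t hab.2.2 hab₀
      rw [Finset.sum_congr rfl key, Finset.sum_const, Finset.offDiag_card, hcardBV,
        smul_eq_mul]
      have : 2 ^ K * 2 ^ K - 2 ^ K = 2 ^ K * (2 ^ K - 1) := by
        rw [Nat.mul_sub, mul_one]
      rw [this, mul_comm]
    have right : ∑ ab ∈ (univ : Finset (BVec K)).offDiag,
        (univ.filter fun f : BVec K → Bool => wt f = t ∧ f ab.1 ≠ f ab.2).card
          = S.card * (2 * (t * (2 ^ K - t))) := by
      have step1 : ∀ ab : BVec K × BVec K,
          (univ.filter fun f : BVec K → Bool => wt f = t ∧ f ab.1 ≠ f ab.2).card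
            = ∑ f ∈ S, if f ab.1 ≠ f ab.2 then 1 else 0 := by
        intro ab
        rw [← Finset.card_filter, hS, Finset.filter_filter]
      rw [Finset.sum_congr rfl (fun ab _ => step1 ab), Finset.sum_comm]
      have step2 : ∀ f ∈ S,
          (∑ ab ∈ (univ : Finset (BVec K)).offDiag, if f ab.1 ≠ f ab.2 then 1 else 0)
            = 2 * (t * (2 ^ K - t)) := by
        intro f hf
        rw [hS, mem_filter] at hf
        rw [← Finset.card_filter]
        have hfe : (univ : Finset (BVec K)).offDiag.filter (fun ab => f ab.1 ≠ f ab.2)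
            = (univ ×ˢ univ).filter (fun ab : BVec K × BVec K => f ab.1 ≠ f ab.2) := by
          ext ⟨x, y⟩
          simp only [mem_filter, Finset.mem_offDiag, mem_product, mem_univ, true_and]
          constructor
          · rintro ⟨_, h⟩; exact h
          · intro h; exact ⟨fun he => h (by rw [he]), h⟩
        rw [hfe, count_pairs_of_wt, hf.2]
      rw [Finset.sum_congr rfl step2, Finset.sum_const, smul_eq_mul]
    rw [← left, right]
  -- pass to the reals
  have hsumS : ∑ f ∈ S, avgSens f = (K : ℝ) * c₀ := by
    unfold avgSens
    rw [← Finset.mul_sum]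
    have hcast : ∑ f ∈ S, ∑ w : BVec K, (sens f w : ℝ)
        = ((2 ^ K * (K * c₀) : ℕ) : ℝ) := by
      rw [← hsum1]; push_cast; ring
    rw [hcast]
    push_cast
    have h2 : (2 : ℝ) ^ K ≠ 0 := by positivity
    field_simp
  rw [hsumS]
  have hc : (c₀ : ℝ) * ((2 : ℝ) ^ K * ((2 : ℝ) ^ K - 1))
      = (S.card : ℝ) * (2 * ((t : ℝ) * ((2 : ℝ) ^ K - (t : ℝ)))) := by
    have h1N : (1 : ℕ) ≤ 2 ^ K := Nat.one_le_two_pow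
    have e1 : ((2 ^ K - t : ℕ) : ℝ) = ((2 ^ K : ℕ) : ℝ) - (t : ℕ) := Nat.cast_sub htN
    have e2 : ((2 ^ K - 1 : ℕ) : ℝ) = ((2 ^ K : ℕ) : ℝ) - (1 : ℕ) := Nat.cast_sub h1N
    have h := congrArg (Nat.cast : ℕ → ℝ) hsum2
    push_cast [e1, e2] at h
    linarith [h]
  have hDR : (S.card : ℝ) ≠ 0 := Nat.cast_ne_zero.mpr hD
  have h2K1 : ((2 : ℝ) ^ K - 1) ≠ 0 := by
    have : (2 : ℝ) ≤ (2 : ℝ) ^ K := by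
      calc (2:ℝ) = 2 ^ 1 := (pow_one 2).symm
      _ ≤ 2 ^ K := pow_le_pow_right₀ (by norm_num) hK
    linarith
  have h2KZ : ((2 : ℝ) ^ K) ≠ 0 := by positivity
  rw [ht] at hc
  have hc' : (c₀ : ℝ) * ((2 : ℝ) ^ K - 1)
      = (S.card : ℝ) * (2 * p * (2 : ℝ) ^ K * (1 - p)) := by
    apply mul_left_cancel₀ h2KZ
    linear_combination hc
  rw [div_eq_div_iff hDR h2K1, pow_succ]
  linear_combination (K : ℝ) * hc'
end

section
/- Let K ≥ 1, let l ∈ {1, …, K}, let p ∈ [0,1] be such that p·2^K is an integer, and let F^fixed_{K,p} be the uniform distribution on the set of Boolean functions f : 𝔽₂^K → 𝔽₂ whose truth table has Hamming weight exactly p·2^K. Then the expected value of the average sensitivity of order l satisfies E_{F^fixed_{K,p}}[s^(l)(f)] = C(K,l) · 2^(K+1)·p·(1−p) / (2^K − 1), where C(K,l) is the binomial coefficient. -/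
open Finset

section AuxLemmas

lemma exists_perm_pair {α : Type*} [DecidableEq α] {a b c d : α}
    (hab : a ≠ b) (hcd : c ≠ d) : ∃ σ : Equiv.Perm α, σ a = c ∧ σ b = d := by
  refine ⟨(Equiv.swap (Equiv.swap a c b) d) * Equiv.swap a c, ?_, ?_⟩
  · have h1 : Equiv.swap a c b ≠ c := by
      intro h
      have := congrArg (Equiv.swap a c) h
      simp at this
      exact hab this.symm
    simp only [Equiv.Perm.mul_apply, Equiv.swap_apply_left]
    exact Equiv.swap_apply_of_ne_of_ne h1.symm hcd
  · simp [Equiv.Perm.mul_apply]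

lemma wt_comp_perm {K : ℕ} (f : BVec K → Bool) (σ : Equiv.Perm (BVec K)) :
    wt (fun w => f (σ w)) = wt f := by
  unfold wt
  exact Finset.card_bij' (fun w _ => σ w) (fun w _ => σ.symm w)
    (by simp) (by simp) (by simp) (by simp)

lemma count_pair_eq' {K : ℕ} (t : ℕ) {w w' a b : BVec K} (hww : w ≠ w') (hab : a ≠ b) :
    (univ.filter fun f : BVec K → Bool => wt f = t ∧ f w ≠ f w').card
      = (univ.filter fun f : BVec K → Bool => wt f = t ∧ f a ≠ f b).card := by
  obtain ⟨σ, ha, hb⟩ := exists_perm_pair hab hww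
  refine Finset.card_bij' (fun f _ => fun v => f (σ v)) (fun g _ => fun v => g (σ.symm v))
    ?_ ?_ ?_ ?_
  · intro f hf
    simp only [mem_filter, mem_univ, true_and] at hf ⊢
    rw [ha, hb, wt_comp_perm]
    exact hf
  · intro g hg
    simp only [mem_filter, mem_univ, true_and] at hg ⊢
    constructor
    · rw [wt_comp_perm g σ.symm]; exact hg.1
    · have h1 : σ.symm w = a := by rw [← ha, Equiv.symm_apply_apply]
      have h2 : σ.symm w' = b := by rw [← hb, Equiv.symm_apply_apply]
      rw [h1, h2]; exact hg.2
  · intro f _; funext v; simp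
  · intro g _; funext v; simp

lemma card_bvec (K : ℕ) : Fintype.card (BVec K) = 2 ^ K := by
  simp [Fintype.card_fun]

lemma card_false {K : ℕ} (f : BVec K → Bool) :
    (univ.filter fun w : BVec K => ¬ (f w = true)).card = 2 ^ K - wt f := by
  have h := Finset.card_filter_add_card_filter_not
    (s := (univ : Finset (BVec K))) (p := fun w => f w = true)
  rw [card_univ, card_bvec] at h
  unfold wt
  omega

lemma offDiag_count {K : ℕ} (t : ℕ) (f : BVec K → Bool) (hf : wt f = t) :
    (∑ q ∈ (univ : Finset (BVec K)).offDiag, if f q.1 ≠ f q.2 then 1 else 0)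
      = 2 * t * (2 ^ K - t) := by
  have hsub : (univ : Finset (BVec K)).offDiag ⊆ univ ×ˢ univ := by
    intro q hq; simp [Finset.mem_offDiag] at hq ⊢
  rw [Finset.sum_subset hsub (by
    intro q _ hq
    simp only [Finset.mem_offDiag, mem_univ, true_and, not_not] at hq
    simp [hq])]
  rw [Finset.sum_product]
  have hinner : ∀ w : BVec K,
      (∑ w' : BVec K, if f w ≠ f w' then 1 else 0)
        = if f w = true then 2 ^ K - t else t := by
    intro w
    rw [← Finset.card_filter]
    cases hfw : f w with
    | true =>
      have : (univ.filter fun w' : BVec K => true ≠ f w')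
          = univ.filter fun w' : BVec K => ¬ (f w' = true) := by
        apply Finset.filter_congr; intro w' _; cases f w' <;> simp
      rw [this, card_false, hf]
      simp
    | false =>
      have : (univ.filter fun w' : BVec K => false ≠ f w')
          = univ.filter fun w' : BVec K => f w' = true := by
        apply Finset.filter_congr; intro w' _; cases f w' <;> simp
      rw [this]
      have h2 : (univ.filter fun w' : BVec K => f w' = true).card = t := hf
      rw [h2]
      simp
  calc (∑ w : BVec K, ∑ w' : BVec K, if f w ≠ f w' then 1 else 0)
      = ∑ w : BVec K, if f w = true then 2 ^ K - t else t := by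
        exact Finset.sum_congr rfl (fun w _ => hinner w)
    _ = 2 * t * (2 ^ K - t) := by
        rw [Finset.sum_ite, Finset.sum_const, Finset.sum_const]
        have h1 : (univ.filter fun w : BVec K => f w = true).card = t := hf
        rw [h1, card_false, hf]
        simp only [smul_eq_mul]
        ring

lemma key_count {K : ℕ} (t : ℕ) {a b : BVec K} (hab : a ≠ b) :
    2 ^ K * (2 ^ K - 1) * (univ.filter fun f : BVec K → Bool => wt f = t ∧ f a ≠ f b).card
      = 2 * t * (2 ^ K - t) * (univ.filter fun f : BVec K → Bool => wt f = t).card := by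
  have main : (∑ q ∈ (univ : Finset (BVec K)).offDiag,
      (univ.filter fun f : BVec K → Bool => wt f = t ∧ f q.1 ≠ f q.2).card)
      = 2 * t * (2 ^ K - t) * (univ.filter fun f : BVec K → Bool => wt f = t).card := by
    have step : ∀ q ∈ (univ : Finset (BVec K)).offDiag,
        (univ.filter fun f : BVec K → Bool => wt f = t ∧ f q.1 ≠ f q.2).card
          = ∑ f : BVec K → Bool, if wt f = t then (if f q.1 ≠ f q.2 then 1 else 0) else 0 := by
      intro q _
      rw [Finset.card_filter]
      exact Finset.sum_congr rfl (fun f _ => by rw [ite_and])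
    rw [Finset.sum_congr rfl step, Finset.sum_comm]
    have step2 : ∀ f : BVec K → Bool,
        (∑ q ∈ (univ : Finset (BVec K)).offDiag,
          if wt f = t then (if f q.1 ≠ f q.2 then 1 else 0) else 0)
        = if wt f = t then 2 * t * (2 ^ K - t) else 0 := by
      intro f
      by_cases hf : wt f = t
      · simp only [hf, if_pos rfl]
        exact offDiag_count t f hf
      · simp [hf]
    rw [Finset.sum_congr rfl (fun f _ => step2 f), ← Finset.sum_filter,
      Finset.sum_const, smul_eq_mul, mul_comm]
  have const : ∀ q ∈ (univ : Finset (BVec K)).offDiag,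
      (univ.filter fun f : BVec K → Bool => wt f = t ∧ f q.1 ≠ f q.2).card
        = (univ.filter fun f : BVec K → Bool => wt f = t ∧ f a ≠ f b).card := by
    intro q hq
    rw [Finset.mem_offDiag] at hq
    exact count_pair_eq' t hq.2.2 hab
  rw [Finset.sum_congr rfl const, Finset.sum_const, smul_eq_mul] at main
  rw [← main, Finset.offDiag_card, card_univ, card_bvec]
  rw [Nat.mul_sub, mul_one]

lemma card_hw_eq (K l : ℕ) :
    (univ.filter fun x : BVec K => hw x = l).card = K.choose l := by
  have : K.choose l = ((univ : Finset (Fin K)).powersetCard l).card := by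
    rw [Finset.card_powersetCard, card_univ, Fintype.card_fin]
  rw [this]
  refine Finset.card_bij' (fun x _ => univ.filter (fun i => x i = true))
    (fun s _ => fun i => decide (i ∈ s)) ?_ ?_ ?_ ?_
  · intro x hx
    simp only [mem_filter, mem_univ, true_and] at hx
    rw [Finset.mem_powersetCard]
    exact ⟨Finset.filter_subset _ _ |>.trans (by simp), hx⟩
  · intro s hs
    rw [Finset.mem_powersetCard] at hs
    simp only [mem_filter, mem_univ, true_and]
    rw [← hs.2]
    unfold hw
    congr 1
    ext i
    simp
  · intro x _
    funext i
    by_cases h : x i = true <;> simp [h]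
  · intro s _
    ext i
    simp

lemma exists_wt (K t : ℕ) (ht : t ≤ 2 ^ K) :
    ∃ f : BVec K → Bool, wt f = t := by
  obtain ⟨s, _, hs⟩ := Finset.exists_subset_card_eq (s := (univ : Finset (BVec K))) (n := t)
    (by rw [card_univ, card_bvec]; exact ht)
  refine ⟨fun w => decide (w ∈ s), ?_⟩
  unfold wt
  rw [← hs]
  congr 1
  ext w
  simp

lemma ne_xor {K : ℕ} {l : ℕ} (hl1 : 1 ≤ l) {w x : BVec K} (hx : hw x = l) :
    w ≠ (fun i => xor (w i) (x i)) := by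
  have hpos : 0 < (univ.filter fun i : Fin K => x i = true).card := by
    rw [show (univ.filter fun i : Fin K => x i = true).card = l from hx]; omega
  obtain ⟨i, hi⟩ := Finset.card_pos.mp hpos
  rw [Finset.mem_filter] at hi
  intro h
  have := congrFun h i
  rw [hi.2] at this
  simp at this

lemma sum_sensOrd {K : ℕ} (t l : ℕ) (hl1 : 1 ≤ l) {a b : BVec K} (hab : a ≠ b) :
    (∑ f ∈ univ.filter (fun f : BVec K → Bool => wt f = t), ∑ w : BVec K, sensOrd f l w)
      = 2 ^ K * K.choose l
        * (univ.filter fun f : BVec K → Bool => wt f = t ∧ f a ≠ f b).card := by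
  have h1 : ∀ f : BVec K → Bool, ∀ w : BVec K, sensOrd f l w
      = ∑ x : BVec K, if hw x = l then
          (if f w ≠ f (fun i => xor (w i) (x i)) then 1 else 0) else 0 := by
    intro f w
    rw [sensOrd, Finset.card_filter]
    exact Finset.sum_congr rfl (fun x _ => by rw [ite_and])
  simp only [h1]
  rw [Finset.sum_comm]
  have h2 : ∀ w : BVec K,
      (∑ f ∈ univ.filter (fun f : BVec K → Bool => wt f = t), ∑ x : BVec K,
        if hw x = l then (if f w ≠ f (fun i => xor (w i) (x i)) then 1 else 0) else 0)
      = K.choose l * (univ.filter fun f : BVec K → Bool => wt f = t ∧ f a ≠ f b).card := by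
    intro w
    rw [Finset.sum_comm]
    have h3 : ∀ x : BVec K,
        (∑ f ∈ univ.filter (fun f : BVec K → Bool => wt f = t),
          if hw x = l then (if f w ≠ f (fun i => xor (w i) (x i)) then 1 else 0) else 0)
        = if hw x = l then
            (univ.filter fun f : BVec K → Bool => wt f = t ∧ f a ≠ f b).card else 0 := by
      intro x
      by_cases hx : hw x = l
      · simp only [hx, if_true]
        rw [← Finset.card_filter, Finset.filter_filter]
        exact count_pair_eq' t (ne_xor hl1 hx) hab
      · simp [hx]
    rw [Finset.sum_congr rfl (fun x _ => h3 x), ← Finset.sum_filter, Finset.sum_const,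
      smul_eq_mul, card_hw_eq]
  rw [Finset.sum_congr rfl (fun w _ => h2 w), Finset.sum_const, smul_eq_mul, card_univ,
    card_bvec, mul_assoc]

end AuxLemmas

theorem expected_avgSensOrd_fixedBias (K l : ℕ) (hK : 1 ≤ K) (hl1 : 1 ≤ l)
    (hlK : l ≤ K) (p : ℝ) (hp0 : 0 ≤ p) (hp1 : p ≤ 1)
    (t : ℕ) (ht : (t : ℝ) = p * 2 ^ K) :
    (∑ f ∈ univ.filter (fun f : BVec K → Bool => wt f = t), avgSensOrd f l)
      / ((univ.filter (fun f : BVec K → Bool => wt f = t)).card : ℝ)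
      = (Nat.choose K l : ℝ) * 2 ^ (K + 1) * p * (1 - p) / ((2 : ℝ) ^ K - 1) := by
  have htle : t ≤ 2 ^ K := by
    have h2 : (t : ℝ) ≤ (2 : ℝ) ^ K := by
      rw [ht]
      nlinarith [pow_pos (by norm_num : (0:ℝ) < 2) K]
    have : (t : ℝ) ≤ ((2 ^ K : ℕ) : ℝ) := by push_cast; exact h2
    exact_mod_cast this
  set a : BVec K := fun _ => false with ha
  set b : BVec K := fun _ => true with hb
  have hab : a ≠ b := by
    intro h
    have := congrFun h ⟨0, hK⟩
    simp [ha, hb] at this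
  have hSne : (univ.filter (fun f : BVec K → Bool => wt f = t)).Nonempty := by
    obtain ⟨f, hf⟩ := exists_wt K t htle
    exact ⟨f, by simp [hf]⟩
  have hScard : (0 : ℝ) < ((univ.filter (fun f : BVec K → Bool => wt f = t)).card : ℝ) := by
    exact_mod_cast Finset.card_pos.mpr hSne
  set N : ℝ := ((univ.filter (fun f : BVec K → Bool => wt f = t)).card : ℝ) with hN
  set C : ℝ := (((univ.filter fun f : BVec K → Bool => wt f = t ∧ f a ≠ f b).card : ℕ) : ℝ)
    with hC
  have hn0 : (0:ℝ) < (2:ℝ) ^ K := pow_pos (by norm_num) K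
  have hn2 : (2:ℝ) ≤ (2:ℝ) ^ K := by
    calc (2:ℝ) = 2 ^ 1 := (pow_one 2).symm
    _ ≤ 2 ^ K := pow_le_pow_right₀ (by norm_num) hK
  have hn1 : (2:ℝ) ^ K - 1 ≠ 0 := by linarith
  have hkey : (2:ℝ) ^ K * ((2:ℝ) ^ K - 1) * C
      = 2 * p * ((2:ℝ)^K)^2 * (1 - p) * N := by
    have h := key_count t hab
    have hcast : ((2 ^ K * (2 ^ K - 1) *
        (univ.filter fun f : BVec K → Bool => wt f = t ∧ f a ≠ f b).card : ℕ) : ℝ)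
        = ((2 * t * (2 ^ K - t) *
        (univ.filter (fun f : BVec K → Bool => wt f = t)).card : ℕ) : ℝ) := by
      exact_mod_cast congrArg (Nat.cast : ℕ → ℝ) h
    rw [Nat.cast_mul, Nat.cast_mul, Nat.cast_mul, Nat.cast_mul,
      Nat.cast_sub Nat.one_le_two_pow, Nat.cast_sub htle] at hcast
    push_cast at hcast
    rw [← hN, ← hC] at hcast
    rw [hcast, ht]
    ring
  have hsum : (∑ f ∈ univ.filter (fun f : BVec K → Bool => wt f = t), avgSensOrd f l)
      = ((2:ℝ) ^ K)⁻¹ * ((2:ℝ) ^ K * (K.choose l : ℝ) * C) := by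
    unfold avgSensOrd
    rw [← Finset.mul_sum]
    congr 1
    have hnat := sum_sensOrd t l hl1 hab
    calc (∑ f ∈ univ.filter (fun f : BVec K → Bool => wt f = t),
            ∑ w : BVec K, (sensOrd f l w : ℝ))
        = ((∑ f ∈ univ.filter (fun f : BVec K → Bool => wt f = t),
            ∑ w : BVec K, sensOrd f l w : ℕ) : ℝ) := by push_cast; rfl
      _ = ((2 ^ K * K.choose l
            * (univ.filter fun f : BVec K → Bool => wt f = t ∧ f a ≠ f b).card : ℕ) : ℝ) := by
          rw [hnat]
      _ = (2:ℝ) ^ K * (K.choose l : ℝ) * C := by rw [hC]; push_cast; ring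
  have hkey2 : ((2:ℝ) ^ K - 1) * C = 2 * p * (2:ℝ)^K * (1 - p) * N := by
    apply mul_left_cancel₀ (ne_of_gt hn0)
    linear_combination hkey
  rw [hsum, div_eq_div_iff (ne_of_gt hScard) hn1]
  have h5 : ((2:ℝ)^K)⁻¹ * ((2:ℝ)^K * (K.choose l : ℝ) * C) = (K.choose l : ℝ) * C := by
    rw [← mul_assoc, ← mul_assoc, inv_mul_cancel₀ (ne_of_gt hn0), one_mul]
  rw [h5, pow_succ]
  linear_combination (K.choose l : ℝ) * hkey2
end

section
/- Let K ≥ 1, let p ∈ [0,1], and let F_{K,p} be the distribution on Boolean functions f : 𝔽₂^K → 𝔽₂ in which the 2^K entries of the truth table of f are independent Bernoulli(p) random variables (each entry is 1 with probability p). Then for every a ∈ [0,1], Lynch's parameter λ = Σ_f P(F_{K,p} = f) Σ_{w ∈ 𝔽₂^K} s_f(w) · a^(wH(w)) · (1−a)^(K − wH(w)) satisfies λ = 2·K·p·(1−p). -/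
open Finset

lemma sum_prod_bool {α : Type*} [Fintype α] [DecidableEq α] (ν : α → Bool → ℝ) :
    ∑ f : α → Bool, ∏ v, ν v (f v) = ∏ v, (ν v true + ν v false) := by
  have h : ∑ f : α → Bool, ∏ v, ν v (f v)
      = ∑ f ∈ Fintype.piFinset (fun _ : α => (univ : Finset Bool)), ∏ v, ν v (f v) := by
    rw [Fintype.piFinset_univ]
  rw [h, ← Finset.prod_univ_sum]
  congr 1; ext v
  simp [Fintype.sum_bool]

lemma prod_ite_bool {α : Type*} [Fintype α] [DecidableEq α] (g : α → Bool) (x y : ℝ) :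
    ∏ v : α, (if g v then x else y)
      = x ^ (univ.filter (fun v => g v = true)).card *
        y ^ (Fintype.card α - (univ.filter (fun v => g v = true)).card) := by
  classical
  rw [Finset.prod_ite, Finset.prod_const, Finset.prod_const]
  have h := Finset.card_filter_add_card_filter_not (s := (univ : Finset α))
    (p := fun v => g v = true)
  simp only [Finset.card_univ] at h
  have h1 : (univ.filter (fun v => g v)).card = (univ.filter (fun v => g v = true)).card := by
    simp
  have h2 : (univ.filter (fun v => ¬ (g v))).card
      = Fintype.card α - (univ.filter (fun v => g v = true)).card := by
    simp only [Bool.not_eq_true] at *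
    omega
  rw [h1, h2]

lemma bernP_eq {K : ℕ} (p : ℝ) (f : BVec K → Bool) :
    bernP p f = ∏ v : BVec K, (if f v then p else 1 - p) := by
  rw [prod_ite_bool]
  simp [bernP, wt, Fintype.card_fun]

lemma exp_one {K : ℕ} (p : ℝ) (w : BVec K) :
    ∑ f : BVec K → Bool, bernP p f * b2r (f w) = p := by
  have key : ∀ f : BVec K → Bool, bernP p f * b2r (f w)
      = ∏ v, ((if f v then p else 1 - p) * (if v = w then b2r (f v) else 1)) := by
    intro f
    rw [Finset.prod_mul_distrib, ← bernP_eq]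
    congr 1
    simp [Finset.prod_ite_eq']
  simp_rw [key]
  rw [sum_prod_bool (fun v b => (if b then p else 1 - p) * (if v = w then b2r b else 1))]
  rw [Finset.prod_congr rfl (g := fun v : BVec K => if v = w then p else 1)
    (fun v _ => by by_cases h : v = w <;> simp [h, b2r])]
  simp [Finset.prod_ite_eq']

lemma exp_two {K : ℕ} (p : ℝ) (w w' : BVec K) (hww : w ≠ w') :
    ∑ f : BVec K → Bool, bernP p f * (b2r (f w) * b2r (f w')) = p * p := by
  have key : ∀ f : BVec K → Bool, bernP p f * (b2r (f w) * b2r (f w'))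
      = ∏ v, ((if f v then p else 1 - p) *
          ((if v = w then b2r (f v) else 1) * (if v = w' then b2r (f v) else 1))) := by
    intro f
    rw [Finset.prod_mul_distrib, ← bernP_eq, Finset.prod_mul_distrib]
    congr 1
    simp [Finset.prod_ite_eq']
  simp_rw [key]
  rw [sum_prod_bool (fun v b => (if b then p else 1 - p) *
      ((if v = w then b2r b else 1) * (if v = w' then b2r b else 1)))]
  rw [Finset.prod_congr rfl
    (g := fun v : BVec K => (if v = w then p else 1) * (if v = w' then p else 1))
    (fun v _ => by
      by_cases h1 : v = w <;> by_cases h2 : v = w' <;>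
        simp [h1, h2, b2r, hww, Ne.symm hww])]
  rw [Finset.prod_mul_distrib]
  simp [Finset.prod_ite_eq']

lemma exp_ind {K : ℕ} (p : ℝ) (w w' : BVec K) (hww : w ≠ w') :
    ∑ f : BVec K → Bool, bernP p f * (if f w = f w' then (0:ℝ) else 1)
      = 2 * p * (1 - p) := by
  have hdec : ∀ b b' : Bool, (if b = b' then (0:ℝ) else 1)
      = b2r b + b2r b' - 2 * (b2r b * b2r b') := by
    intro b b'; cases b <;> cases b' <;> norm_num [b2r]
  simp_rw [hdec, mul_sub, mul_add]
  rw [Finset.sum_sub_distrib, Finset.sum_add_distrib, exp_one, exp_one]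
  have h2 : ∀ f : BVec K → Bool, bernP p f * (2 * (b2r (f w) * b2r (f w')))
      = 2 * (bernP p f * (b2r (f w) * b2r (f w'))) := by intro f; ring
  simp_rw [h2]
  rw [← Finset.mul_sum, exp_two p w w' hww]
  ring

lemma weight_sum {K : ℕ} (a : ℝ) :
    ∑ w : BVec K, a ^ hw w * (1 - a) ^ (K - hw w) = 1 := by
  have h : ∀ w : BVec K, a ^ hw w * (1 - a) ^ (K - hw w)
      = ∏ i : Fin K, (if w i then a else 1 - a) := by
    intro w; rw [prod_ite_bool]; simp [hw, Fintype.card_fin]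
  simp_rw [h]
  rw [sum_prod_bool (fun (_ : Fin K) b => if b then a else 1 - a)]
  simp

lemma sens_cast {K : ℕ} (f : BVec K → Bool) (w : BVec K) :
    (sens f w : ℝ) = ∑ i : Fin K, (if f w = f (flipCoord w i) then (0:ℝ) else 1) := by
  rw [sens, Finset.card_filter]
  push_cast
  refine Finset.sum_congr rfl fun i _ => ?_
  by_cases h : f w = f (flipCoord w i) <;> simp [h]

lemma flip_ne {K : ℕ} (w : BVec K) (i : Fin K) : w ≠ flipCoord w i := by
  intro h
  have := congrFun h i
  simp [flipCoord] at this

theorem lynch_lambda_bernoulli (K : ℕ) (hK : 1 ≤ K) (p : ℝ)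
    (hp0 : 0 ≤ p) (hp1 : p ≤ 1) (a : ℝ) (ha0 : 0 ≤ a) (ha1 : a ≤ 1) :
    ∑ f : BVec K → Bool, bernP p f *
        ∑ w : BVec K, (sens f w : ℝ) * a ^ hw w * (1 - a) ^ (K - hw w)
      = 2 * K * p * (1 - p) := by
  have key : ∀ (w : BVec K) (i : Fin K),
      ∑ f : BVec K → Bool, bernP p f * (if f w = f (flipCoord w i) then (0:ℝ) else 1)
        = 2 * p * (1 - p) := fun w i => exp_ind p w (flipCoord w i) (flip_ne w i)
  have step1 : ∀ f : BVec K → Bool,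
      bernP p f * ∑ w : BVec K, (sens f w : ℝ) * a ^ hw w * (1 - a) ^ (K - hw w)
        = ∑ w : BVec K, ∑ i : Fin K, (a ^ hw w * (1 - a) ^ (K - hw w)) *
            (bernP p f * (if f w = f (flipCoord w i) then (0:ℝ) else 1)) := by
    intro f
    rw [Finset.mul_sum]
    refine Finset.sum_congr rfl fun w _ => ?_
    rw [sens_cast, Finset.sum_mul, Finset.sum_mul, Finset.mul_sum]
    exact Finset.sum_congr rfl fun i _ => by ring
  rw [Finset.sum_congr rfl fun f _ => step1 f, Finset.sum_comm]
  have step2 : ∀ w : BVec K,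
      ∑ f : BVec K → Bool, ∑ i : Fin K, (a ^ hw w * (1 - a) ^ (K - hw w)) *
          (bernP p f * (if f w = f (flipCoord w i) then (0:ℝ) else 1))
        = (K : ℝ) * ((a ^ hw w * (1 - a) ^ (K - hw w)) * (2 * p * (1 - p))) := by
    intro w
    rw [Finset.sum_comm]
    have inner : ∀ i : Fin K,
        ∑ f : BVec K → Bool, (a ^ hw w * (1 - a) ^ (K - hw w)) *
            (bernP p f * (if f w = f (flipCoord w i) then (0:ℝ) else 1))
          = (a ^ hw w * (1 - a) ^ (K - hw w)) * (2 * p * (1 - p)) := by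
      intro i
      rw [← Finset.mul_sum, key w i]
    rw [Finset.sum_congr rfl fun i _ => inner i, Finset.sum_const, Finset.card_univ,
      Fintype.card_fin, nsmul_eq_mul]
  rw [Finset.sum_congr rfl fun w _ => step2 w]
  have step3 : ∑ w : BVec K, (K : ℝ) * ((a ^ hw w * (1 - a) ^ (K - hw w)) * (2 * p * (1 - p)))
      = (K : ℝ) * (2 * p * (1 - p)) * ∑ w : BVec K, a ^ hw w * (1 - a) ^ (K - hw w) := by
    rw [Finset.mul_sum]
    exact Finset.sum_congr rfl fun w _ => by ring
  rw [step3, weight_sum]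
  ring
end
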